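/- Let F be a field, k ≥ 2, and work over the field F(λ) of rational functions. Let D(λ) = Σ_{i=0}^{k} D_i φ_i(λ) with D_i ∈ F^{m×m}, let A ∈ F^{n×n}, B ∈ F^{n×m}, C ∈ F^{m×n}, and set G(λ) := D(λ) + C(λI_n − A)^{−1}B ∈ F(λ)^{m×m}. Let w ∈ F^k and let L(λ) ∈ F[λ]^{km×km} be a pencil satisfying (Φ_k(λ)^T⊗I_m)·L(λ) = w^T ⊗ D(λ). Define Ĝ(λ) := L(λ) + (e_k⊗I_m)·C(λI_n−A)^{−1}B·(w^T⊗I_m) ∈ F(λ)^{km×km}, where e_k is the k-th canonical vector of F^k. Then (Φ_k(λ)^T⊗I_m)·Ĝ(λ) = w^T ⊗ G(λ). -/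
import Mathlib


open Matrix

/-- The column vector `Φ_k(λ) ⊗ I_m` as a `km × m` polynomial matrix. -/
noncomputable def phiKron {F : Type*} [Field F] (φ : ℕ → Polynomial F) (k m : ℕ) :
    Matrix (Fin k × Fin m) (Fin m) (Polynomial F) :=
  Matrix.of fun p j => if p.2 = j then φ (k - 1 - (p.1 : ℕ)) else 0

/-- The matrix `v ⊗ I_m ∈ R^{km×m}` built from a vector `v ∈ R^k`. -/
def vKron {R : Type*} [Semiring R] (k m : ℕ) (v : Fin k → R) :
    Matrix (Fin k × Fin m) (Fin m) R :=
  Matrix.of fun p j => if p.2 = j then v p.1 else 0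

/-- The matrix `(λ I_n − A)⁻¹` over the field of rational functions. -/
noncomputable def lamResolvent {F : Type*} [Field F] {n : ℕ} (A : Matrix (Fin n) (Fin n) F) :
    Matrix (Fin n) (Fin n) (RatFunc F) :=
  (Matrix.diagonal (fun _ => (RatFunc.X : RatFunc F)) - A.map (algebraMap F (RatFunc F)))⁻¹

/-- If `L(λ)` is a pencil with `(Φ_k(λ)ᵀ⊗I_m)L(λ) = wᵀ ⊗ D(λ)` and
`Ĝ(λ) = L(λ) + (e_k⊗I_m)C(λI_n−A)⁻¹B(wᵀ⊗I_m)` is the transfer function of the associated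
`𝕄₂`-strong linearization of `G(λ) = D(λ) + C(λI_n−A)⁻¹B`, then
`(Φ_k(λ)ᵀ⊗I_m)Ĝ(λ) = wᵀ ⊗ G(λ)`. -/
theorem phiKron_mul_transferFunction_M2
    {F : Type*} [Field F] {m n k : ℕ} (hk : 2 ≤ k)
    (α β γ : ℕ → F) (hα : ∀ j, α j ≠ 0)
    (φ : ℕ → Polynomial F) (hφ0 : φ 0 = 1)
    (hrec : ∀ j : ℕ, Polynomial.C (α j) * φ (j + 1)
      = (Polynomial.X - Polynomial.C (β j)) * φ j
        - Polynomial.C (γ j) * (if j = 0 then 0 else φ (j - 1)))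
    (D : ℕ → Matrix (Fin m) (Fin m) F)
    (A : Matrix (Fin n) (Fin n) F) (B : Matrix (Fin n) (Fin m) F)
    (C : Matrix (Fin m) (Fin n) F)
    (G : Matrix (Fin m) (Fin m) (RatFunc F))
    (hG : G = (∑ i ∈ Finset.range (k + 1),
          (D i).map (fun a => φ i * Polynomial.C a)).map (algebraMap (Polynomial F) (RatFunc F))
        + C.map (algebraMap F (RatFunc F)) * lamResolvent A * B.map (algebraMap F (RatFunc F)))
    (w : Fin k → F)
    (L : Matrix (Fin k × Fin m) (Fin k × Fin m) (Polynomial F))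
    (hLpencil : ∀ p q, (L p q).natDegree ≤ 1)
    (hansatz : (phiKron φ k m)ᵀ * L
      = (∑ i ∈ Finset.range (k + 1), (D i).map (fun a => φ i * Polynomial.C a)) *
          (vKron k m (fun i => Polynomial.C (w i)))ᵀ)
    (Ghat : Matrix (Fin k × Fin m) (Fin k × Fin m) (RatFunc F))
    (hGhat : Ghat = L.map (algebraMap (Polynomial F) (RatFunc F))
      + vKron k m (fun i : Fin k => if (i : ℕ) = k - 1 then (1 : RatFunc F) else 0) *
          (C.map (algebraMap F (RatFunc F)) * lamResolvent A *
            B.map (algebraMap F (RatFunc F))) *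
          (vKron k m (fun i => algebraMap F (RatFunc F) (w i)))ᵀ) :
    ((phiKron φ k m).map (algebraMap (Polynomial F) (RatFunc F)))ᵀ * Ghat
      = G * (vKron k m (fun i => algebraMap F (RatFunc F) (w i)))ᵀ := by
  subst hG hGhat
  set f := algebraMap (Polynomial F) (RatFunc F)
  have h1 : ((phiKron φ k m).map f)ᵀ * L.map f
      = ((∑ i ∈ Finset.range (k + 1), (D i).map (fun a => φ i * Polynomial.C a)).map f)
          * (vKron k m (fun i => algebraMap F (RatFunc F) (w i)))ᵀ := by
    have := congrArg (fun M => M.map f) hansatz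
    simp only [Matrix.map_mul] at this
    rw [Matrix.transpose_map] at this
    rw [this]
    congr 1
    ext i p
    simp only [Matrix.transpose_apply, Matrix.map_apply, vKron, Matrix.of_apply, apply_ite f]
    by_cases h : p.2 = i <;> simp [h, f]
  have h2 : ((phiKron φ k m).map f)ᵀ *
      vKron k m (fun i : Fin k => if (i : ℕ) = k - 1 then (1 : RatFunc F) else 0)
      = (1 : Matrix (Fin m) (Fin m) (RatFunc F)) := by
    ext i j
    rw [Matrix.mul_apply]
    rw [Fintype.sum_prod_type]
    have hk1 : k - 1 < k := by omega
    simp only [Matrix.transpose_apply, Matrix.map_apply, phiKron, vKron, Matrix.of_apply]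
    rw [Finset.sum_eq_single (⟨k - 1, hk1⟩ : Fin k)]
    · simp only [Fin.val_mk, if_pos rfl, Nat.sub_self, hφ0]
      rw [Finset.sum_eq_single j]
      · simp [Matrix.one_apply, eq_comm]
      · intro b _ hb
        simp [hb, Ne.symm hb]
      · simp
    · intro a _ ha
      have : (a : ℕ) ≠ k - 1 := fun h => ha (Fin.ext h)
      simp [this]
    · simp
  rw [Matrix.mul_add, ← Matrix.mul_assoc, ← Matrix.mul_assoc, h2, Matrix.one_mul, h1,
    Matrix.add_mul]
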